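/- Let U be a two-qubit unitary and |ψ⟩ a unit vector such that U|ψ⟩ = μ|c⟩|d⟩ + √(1−μ²)|c⊥⟩|d⊥⟩ with μ ∈ (0,1) (entangled). Then there is no nonzero operator K on ℂ² with K†K not proportional to the identity such that (K⊗I)U|ψ⟩⟨ψ|U†(K⊗I)† is orthogonal (trace of product zero) to (K⊗I)(I − U|ψ⟩⟨ψ|U†)(K⊗I)†. -/
import Mathlib

open Matrix Kronecker

noncomputable section

abbrev QVec := Fin 2 → ℂ
abbrev QVec2 := Fin 2 × Fin 2 → ℂ

def prodVec (v w : QVec) : QVec2 := fun p => v p.1 * w p.2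

def outer (v : QVec2) : Matrix (Fin 2 × Fin 2) (Fin 2 × Fin 2) ℂ :=
  vecMulVec v (star v)

section Helpers

set_option linter.unusedSectionVars false

variable {n : Type*} [Fintype n] [DecidableEq n]

lemma mul_vecMulVec' (A : Matrix n n ℂ) (u v : n → ℂ) :
    A * vecMulVec u v = vecMulVec (A.mulVec u) v := by
  ext i j
  simp only [Matrix.mul_apply, Matrix.vecMulVec_apply, Matrix.mulVec, dotProduct,
    Finset.sum_mul]
  apply Finset.sum_congr rfl; intros; ring

lemma vecMulVec_mul' (A : Matrix n n ℂ) (u v : n → ℂ) :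
    vecMulVec u v * A = vecMulVec u (Matrix.vecMul v A) := by
  ext i j
  simp only [Matrix.mul_apply, Matrix.vecMulVec_apply, Matrix.vecMul, dotProduct,
    Finset.mul_sum]
  apply Finset.sum_congr rfl; intros; ring

lemma trace_vecMulVec_mul' (u v : n → ℂ) (A : Matrix n n ℂ) :
    (vecMulVec u v * A).trace = v ⬝ᵥ A.mulVec u := by
  simp only [Matrix.trace, Matrix.diag, Matrix.mul_apply, Matrix.vecMulVec_apply,
    dotProduct, Matrix.mulVec, Finset.mul_sum]
  rw [Finset.sum_comm]
  apply Finset.sum_congr rfl; intro i _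
  apply Finset.sum_congr rfl; intro j _
  ring

lemma vecMulVec_mulVec' (u v x : n → ℂ) :
    (vecMulVec u v).mulVec x = (v ⬝ᵥ x) • u := by
  ext i
  simp only [Matrix.mulVec, Matrix.vecMulVec_apply, dotProduct, Pi.smul_apply,
    smul_eq_mul, Finset.sum_mul]
  apply Finset.sum_congr rfl; intros; ring

lemma star_dot_comm (u v : n → ℂ) : star u ⬝ᵥ v = star (star v ⬝ᵥ u) := by
  simp only [dotProduct, star_sum, star_mul', star_star, Pi.star_apply]
  exact Finset.sum_congr rfl fun _ _ => mul_comm _ _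

lemma star_dot_mulVec' (A : Matrix n n ℂ) (u v : n → ℂ) :
    star u ⬝ᵥ A.mulVec v = star (Aᴴ.mulVec u) ⬝ᵥ v := by
  rw [Matrix.dotProduct_mulVec, Matrix.star_mulVec, Matrix.conjTranspose_conjTranspose]

lemma star_dot_self_zero (v : n → ℂ) (h : star v ⬝ᵥ v = 0) : v = 0 := by
  have h1 : ((∑ j, Complex.normSq (v j) : ℝ) : ℂ) = 0 := by
    rw [← h]
    push_cast
    simp only [dotProduct, Pi.star_apply, Complex.star_def]
    apply Finset.sum_congr rfl; intros
    rw [Complex.normSq_eq_conj_mul_self]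
  have h2 : ∑ j, Complex.normSq (v j) = 0 := by exact_mod_cast h1
  funext i
  have := (Finset.sum_eq_zero_iff_of_nonneg
      (fun j _ => Complex.normSq_nonneg (v j))).mp h2 i (Finset.mem_univ i)
  simpa using Complex.normSq_eq_zero.mp this

end Helpers

lemma kron_one_conjTranspose (K : Matrix (Fin 2) (Fin 2) ℂ) :
    (K ⊗ₖ (1 : Matrix (Fin 2) (Fin 2) ℂ))ᴴ = Kᴴ ⊗ₖ (1 : Matrix (Fin 2) (Fin 2) ℂ) := by
  ext ⟨i, j⟩ ⟨k, l⟩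
  simp [Matrix.conjTranspose_apply, Matrix.kroneckerMap_apply, Matrix.one_apply, eq_comm]
  aesop

lemma kron_one_mulVec_prod (Q : Matrix (Fin 2) (Fin 2) ℂ) (a b : QVec) :
    (Q ⊗ₖ (1 : Matrix (Fin 2) (Fin 2) ℂ)).mulVec (prodVec a b)
      = prodVec (Q.mulVec a) b := by
  ext ⟨i, j⟩
  simp only [Matrix.mulVec, dotProduct, Fintype.sum_prod_type,
    Matrix.kroneckerMap_apply, prodVec, Matrix.one_apply]
  simp [Finset.sum_mul, mul_ite, Finset.mul_sum, Fin.sum_univ_two]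
  ring

theorem no_local_kraus_discriminates_entangled
    (U : Matrix (Fin 2 × Fin 2) (Fin 2 × Fin 2) ℂ)
    (hU : U ∈ Matrix.unitaryGroup (Fin 2 × Fin 2) ℂ)
    (ψ : QVec2) (hψ : star ψ ⬝ᵥ ψ = 1)
    (μ : ℝ) (hμ : μ ∈ Set.Ioo (0 : ℝ) 1)
    (c cp d dp : QVec)
    (hc : star c ⬝ᵥ c = 1) (hcp : star cp ⬝ᵥ cp = 1) (hccp : star c ⬝ᵥ cp = 0)
    (hd : star d ⬝ᵥ d = 1) (hdp : star dp ⬝ᵥ dp = 1) (hddp : star d ⬝ᵥ dp = 0)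
    (hSchmidt : U.mulVec ψ = ((μ : ℂ)) • prodVec c d
        + ((Real.sqrt (1 - μ ^ 2) : ℂ)) • prodVec cp dp)
    (K : Matrix (Fin 2) (Fin 2) ℂ) (hK : K ≠ 0)
    (horth : (((K ⊗ₖ (1 : Matrix (Fin 2) (Fin 2) ℂ)) * outer (U.mulVec ψ)
          * (K ⊗ₖ (1 : Matrix (Fin 2) (Fin 2) ℂ))ᴴ)
        * ((K ⊗ₖ (1 : Matrix (Fin 2) (Fin 2) ℂ))
          * ((1 : Matrix (Fin 2 × Fin 2) (Fin 2 × Fin 2) ℂ) - outer (U.mulVec ψ))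
          * (K ⊗ₖ (1 : Matrix (Fin 2) (Fin 2) ℂ))ᴴ)).trace = 0) :
    ∃ κ : ℂ, Kᴴ * K = κ • (1 : Matrix (Fin 2) (Fin 2) ℂ) := by
  set φ : QVec2 := U.mulVec ψ with hφdef
  set M : Matrix (Fin 2 × Fin 2) (Fin 2 × Fin 2) ℂ := K ⊗ₖ (1 : Matrix (Fin 2) (Fin 2) ℂ) with hM
  set P : Matrix (Fin 2 × Fin 2) (Fin 2 × Fin 2) ℂ := outer φ with hP
  -- φ is a unit vector
  have hφ : star φ ⬝ᵥ φ = 1 := by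
    have h1 : Uᴴ * U = 1 := hU.1
    rw [hφdef, Matrix.star_mulVec, Matrix.dotProduct_mulVec, Matrix.vecMul_vecMul, h1,
      Matrix.vecMul_one, hψ]
  -- P is idempotent and hermitian
  have hsumφ : ∀ (i j : Fin 2 × Fin 2),
      ∑ k, (φ i * star (φ k)) * (φ k * star (φ j))
        = (φ i * star (φ j)) * (∑ k, star (φ k) * φ k) := by
    intro i j
    rw [Finset.mul_sum]
    apply Finset.sum_congr rfl; intros; ring
  have hPP : P * P = P := by
    ext i j
    rw [hP, outer, Matrix.mul_apply]
    simp only [Matrix.vecMulVec_apply, Pi.star_apply]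
    rw [hsumφ i j, show (∑ k, star (φ k) * φ k) = star φ ⬝ᵥ φ from rfl, hφ, mul_one]
  have hPH : Pᴴ = P := by
    rw [hP, outer]
    ext i j
    simp [Matrix.conjTranspose_apply, Matrix.vecMulVec_apply, mul_comm]
  -- rewrite the trace condition
  set x : QVec2 := Mᴴ.mulVec (M.mulVec φ) with hx
  set R : Matrix (Fin 2 × Fin 2) (Fin 2 × Fin 2) ℂ := 1 - P with hR
  have hRR : R * R = R := by
    rw [hR, Matrix.sub_mul, Matrix.one_mul, Matrix.mul_sub, Matrix.mul_one, hPP]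
    abel
  have hRH : Rᴴ = R := by rw [hR]; simp [hPH]
  have key : star (R.mulVec x) ⬝ᵥ (R.mulVec x) = 0 := by
    have e1 : M * P * Mᴴ = vecMulVec (M.mulVec φ) (star (M.mulVec φ)) := by
      rw [hP, outer, Matrix.mul_assoc, vecMulVec_mul', mul_vecMulVec', ← Matrix.star_mulVec]
    have e2 : ((M * P * Mᴴ) * (M * R * Mᴴ)).trace = 0 := horth
    rw [e1, trace_vecMulVec_mul'] at e2
    have e3 : star (M.mulVec φ) ⬝ᵥ (M * R * Mᴴ).mulVec (M.mulVec φ)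
        = star x ⬝ᵥ R.mulVec x := by
      rw [← Matrix.mulVec_mulVec, ← Matrix.mulVec_mulVec, star_dot_mulVec']
    rw [e3] at e2
    have e4 : star x ⬝ᵥ R.mulVec x = star (R.mulVec x) ⬝ᵥ (R.mulVec x) := by
      conv_lhs => rw [← hRR, ← Matrix.mulVec_mulVec, star_dot_mulVec', hRH]
    rw [← e4]; exact e2
  have hRx : R.mulVec x = 0 := star_dot_self_zero _ key
  -- hence x = κ • φ
  set κ : ℂ := star φ ⬝ᵥ x with hκ
  have hxκ : x = κ • φ := by
    have h0 : x - (vecMulVec φ (star φ)).mulVec x = 0 := by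
      have := hRx
      rwa [hR, Matrix.sub_mulVec, Matrix.one_mulVec, hP, outer] at this
    have h2 : x = (vecMulVec φ (star φ)).mulVec x := by
      linear_combination (norm := module) h0
    rw [h2, vecMulVec_mulVec', hκ]
  -- x = (KᴴK ⊗ 1) φ
  set Q : Matrix (Fin 2) (Fin 2) ℂ := Kᴴ * K with hQ
  have hxQ : x = (Q ⊗ₖ (1 : Matrix (Fin 2) (Fin 2) ℂ)).mulVec φ := by
    rw [hx, hM, Matrix.mulVec_mulVec, kron_one_conjTranspose, ← Matrix.mul_kronecker_mul,
      Matrix.one_mul, hQ]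
  -- Schmidt decomposition
  set ν : ℝ := Real.sqrt (1 - μ ^ 2) with hν
  have hν0 : (0 : ℝ) < ν := Real.sqrt_pos.mpr (by nlinarith [hμ.1, hμ.2])
  have hφS : φ = ((μ : ℂ)) • prodVec c d + ((ν : ℂ)) • prodVec cp dp := hSchmidt
  have hxS : x = ((μ : ℂ)) • prodVec (Q.mulVec c) d + ((ν : ℂ)) • prodVec (Q.mulVec cp) dp := by
    rw [hxQ, hφS, Matrix.mulVec_add, Matrix.mulVec_smul, Matrix.mulVec_smul,
      kron_one_mulVec_prod, kron_one_mulVec_prod]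
  -- extract eigen-equations
  have hdpd : star dp ⬝ᵥ d = 0 := by rw [star_dot_comm, hddp, star_zero]
  have heq : ((μ : ℂ)) • prodVec (Q.mulVec c) d + ((ν : ℂ)) • prodVec (Q.mulVec cp) dp
      = κ • (((μ : ℂ)) • prodVec c d + ((ν : ℂ)) • prodVec cp dp) := by
    rw [← hxS, ← hφS, ← hxκ]
  have hQc : Q.mulVec c = κ • c := by
    funext i
    have h := fun j => congrFun heq (i, j)
    have hsum : ∑ j, star d j * (((μ : ℂ)) • prodVec (Q.mulVec c) d
          + ((ν : ℂ)) • prodVec (Q.mulVec cp) dp) (i, j)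
        = ∑ j, star d j * (κ • (((μ : ℂ)) • prodVec c d + ((ν : ℂ)) • prodVec cp dp)) (i, j) := by
      apply Finset.sum_congr rfl; intro j _; rw [h j]
    simp only [Pi.add_apply, Pi.smul_apply, prodVec, smul_eq_mul] at hsum
    have l1 : ∀ (a b : QVec) (t s : ℂ), ∑ j, star d j * (t * (a i * d j) + s * (b i * dp j))
        = t * a i * (star d ⬝ᵥ d) + s * b i * (star d ⬝ᵥ dp) := by
      intro a b t s
      simp only [dotProduct, Finset.mul_sum, Pi.star_apply]
      rw [← Finset.sum_add_distrib]
      apply Finset.sum_congr rfl; intros; ring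
    have l2 : ∑ j, star d j * (κ * (↑μ * (c i * d j) + ↑ν * (cp i * dp j)))
        = κ * ↑μ * c i * (star d ⬝ᵥ d) + κ * ↑ν * cp i * (star d ⬝ᵥ dp) := by
      simp only [dotProduct, Finset.mul_sum, Pi.star_apply]
      rw [← Finset.sum_add_distrib]
      apply Finset.sum_congr rfl; intros; ring
    rw [l1, l2, hd, hddp] at hsum
    simp only [mul_one, mul_zero, add_zero] at hsum
    have hμ0 : (μ : ℂ) ≠ 0 := Complex.ofReal_ne_zero.mpr (ne_of_gt hμ.1)
    have h5 : (μ : ℂ) * (Q.mulVec c i) = (μ : ℂ) * (κ * c i) := by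
      rw [show (μ:ℂ) * (κ * c i) = κ * ↑μ * c i by ring]
      rw [show (μ:ℂ) * (Q.mulVec c i) = ↑μ * Q.mulVec c i by ring]
      exact hsum
    have := mul_left_cancel₀ hμ0 h5
    simpa using this
  have hQcp : Q.mulVec cp = κ • cp := by
    funext i
    have h := fun j => congrFun heq (i, j)
    have hsum : ∑ j, star dp j * (((μ : ℂ)) • prodVec (Q.mulVec c) d
          + ((ν : ℂ)) • prodVec (Q.mulVec cp) dp) (i, j)
        = ∑ j, star dp j * (κ • (((μ : ℂ)) • prodVec c d + ((ν : ℂ)) • prodVec cp dp)) (i, j) := by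
      apply Finset.sum_congr rfl; intro j _; rw [h j]
    simp only [Pi.add_apply, Pi.smul_apply, prodVec, smul_eq_mul] at hsum
    have l1 : ∑ j, star dp j * (↑μ * (Q.mulVec c i * d j) + ↑ν * (Q.mulVec cp i * dp j))
        = ↑μ * Q.mulVec c i * (star dp ⬝ᵥ d) + ↑ν * Q.mulVec cp i * (star dp ⬝ᵥ dp) := by
      simp only [dotProduct, Finset.mul_sum, Pi.star_apply]
      rw [← Finset.sum_add_distrib]
      apply Finset.sum_congr rfl; intros; ring
    have l2 : ∑ j, star dp j * (κ * (↑μ * (c i * d j) + ↑ν * (cp i * dp j)))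
        = κ * ↑μ * c i * (star dp ⬝ᵥ d) + κ * ↑ν * cp i * (star dp ⬝ᵥ dp) := by
      simp only [dotProduct, Finset.mul_sum, Pi.star_apply]
      rw [← Finset.sum_add_distrib]
      apply Finset.sum_congr rfl; intros; ring
    rw [l1, l2, hdp, hdpd] at hsum
    simp only [mul_one, mul_zero, zero_add] at hsum
    have hν0' : (ν : ℂ) ≠ 0 := Complex.ofReal_ne_zero.mpr (ne_of_gt hν0)
    have h5 : (ν : ℂ) * (Q.mulVec cp i) = (ν : ℂ) * (κ * cp i) := by
      rw [show (ν:ℂ) * (κ * cp i) = κ * ↑ν * cp i by ring]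
      rw [show (ν:ℂ) * (Q.mulVec cp i) = ↑ν * Q.mulVec cp i by ring]
      exact hsum
    have := mul_left_cancel₀ hν0' h5
    simpa using this
  -- c, cp orthonormal basis ⇒ Q = κ • 1
  refine ⟨κ, ?_⟩
  set C : Matrix (Fin 2) (Fin 2) ℂ := Matrix.of (fun i j => if j = 0 then c i else cp i) with hC
  have hcpc : star cp ⬝ᵥ c = 0 := by rw [star_dot_comm, hccp, star_zero]
  have hCC : Cᴴ * C = 1 := by
    ext i j
    fin_cases i <;> fin_cases j <;>
      simp only [Matrix.mul_apply, Matrix.conjTranspose_apply, hC, Matrix.of_apply,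
        Matrix.one_apply] <;>
      simp <;>
      first
        | (simpa [dotProduct, Fin.sum_univ_two] using hc)
        | (simpa [dotProduct, Fin.sum_univ_two] using hcp)
        | (simpa [dotProduct, Fin.sum_univ_two] using hccp)
        | (simpa [dotProduct, Fin.sum_univ_two] using hcpc)
  have hCC' : C * Cᴴ = 1 := mul_eq_one_comm.mp hCC
  have hQC : Q * C = κ • C := by
    ext i j
    have hcol : (Q * C) i j = Q.mulVec (fun k => C k j) i := rfl
    rw [hcol]
    by_cases hj : j = 0
    · subst hj
      have hc0 : (fun k => C k 0) = c := by funext k; simp [hC]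
      rw [hc0, hQc]
      simp [hC]
    · have hc1 : (fun k => C k j) = cp := by funext k; simp [hC, hj]
      rw [hc1, hQcp]
      simp [hC, hj]
  calc Q = Q * (C * Cᴴ) := by rw [hCC', Matrix.mul_one]
    _ = (Q * C) * Cᴴ := (Matrix.mul_assoc Q C Cᴴ).symm
    _ = (κ • C) * Cᴴ := by rw [hQC]
    _ = κ • (C * Cᴴ) := by rw [Matrix.smul_mul]
    _ = κ • 1 := by rw [hCC']
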